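/- Let F be a finite field, V a finite-dimensional F-vector space of dimension at least 3, q : V → F a non-degenerate quadratic form, and a ∈ F with a ≠ 0. Then the girth of the representation graph G_{q,a} equals 3. -/

import Mathlib

open QuadraticMap Module

/-- The representation graph `G_{q,a}`: vertices are the vectors of `V`, and distinct
`x, y` are adjacent iff `q (x - y) = a`. -/
def repGraph {F V : Type*} [Field F] [AddCommGroup V] [Module F V]
    (q : QuadraticForm F V) (a : F) : SimpleGraph V where
  Adj x y := x ≠ y ∧ q (x - y) = a
  symm := by
    constructor
    rintro x y ⟨hxy, h⟩
    refine ⟨hxy.symm, ?_⟩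
    rw [← neg_sub x y, QuadraticMap.map_neg]
    exact h
  loopless := by constructor; rintro x ⟨h, -⟩; exact h rfl

section Aux

open Polynomial in
lemma aux_sq_add {F : Type*} [Field F] [Fintype F] (h2 : (2:F) ≠ 0) {d : F} (hd : d ≠ 0) (m : F) :
    ∃ s t : F, s^2 + d*t^2 = m := by
  have hchar : ringChar F ≠ 2 := by
    intro h
    have : ((2:ℕ) : F) = 0 := by rw [← h]; exact ringChar.Nat.cast_ringChar
    exact h2 (by push_cast at this; exact this)
  have hodd := FiniteField.odd_card_of_char_ne_two hchar
  have hdeg : (C d * X^2 - C m : F[X]).degree = 2 := by compute_degree!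
  obtain ⟨s, t, hst⟩ := FiniteField.exists_root_sum_quadratic
    (f := (X:F[X])^2) (g := C d * X^2 - C m) (by simp) hdeg hodd
  simp only [eval_add, eval_sub, eval_mul, eval_pow, eval_C, eval_X] at hst
  exact ⟨s, t, by linear_combination hst⟩

lemma aux_case3 {F : Type*} [Field F] {a e r r' : F} (he : e ≠ 0) (h2 : (2:F) ≠ 0)
    (hA : a - e*r^2 ≠ 0) (hg : 4*e*(r^2 - r*r' + r'^2) = 3*a) :
    ∃ s t s' t' : F,
      s*t + e*r^2 = a ∧ s'*t' + e*r'^2 = a ∧ s*t' + s'*t + 2*(e*(r*r')) = a := by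
  refine ⟨1, a - e*r^2, (a - 2*e*r*r')/(2*(a - e*r^2)), (a - 2*e*r*r')/2, by ring, ?_, ?_⟩
  · have key : (a - 2*e*r*r')^2 = 4*(a - e*r^2)*(a - e*r'^2) := by linear_combination a*hg
    field_simp
    linear_combination key
  · field_simp
    ring

lemma aux_triangle {F : Type*} [Field F] [Fintype F] {a e : F} (ha : a ≠ 0) (he : e ≠ 0) :
    ∃ s t r s' t' r' : F,
      s*t + e*r^2 = a ∧ s'*t' + e*r'^2 = a ∧ s*t' + s'*t + 2*(e*(r*r')) = a := by
  by_cases hsq : ∃ c : F, e * c^2 = a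
  · obtain ⟨c, hc⟩ := hsq
    exact ⟨1, 0, c, 1, a, 0, by linear_combination hc, by ring, by ring⟩
  · have h2 : (2:F) ≠ 0 := by
      intro h2
      have hchar : ringChar F = 2 :=
        CharP.ringChar_of_prime_eq_zero Nat.prime_two (by push_cast; exact h2)
      obtain ⟨c, hc⟩ := FiniteField.isSquare_of_char_two hchar (a / e)
      refine hsq ⟨c, ?_⟩
      rw [pow_two, ← hc, mul_div_cancel₀ _ he]
    by_cases h3 : (3:F) = 0
    · exact ⟨1, a, 0, 2, -a, 0, by ring, by linear_combination -a*h3, by ring⟩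
    · have h4 : (4:F) ≠ 0 := fun h4 => h2 (mul_self_eq_zero.mp (by linear_combination h4))
      obtain ⟨s0, t0, hst⟩ := aux_sq_add h2 (d := 3) h3 (3*a/(4*e))
      have hg : 4*e*((s0 + t0)^2 - (s0 + t0)*(2*t0) + (2*t0)^2) = 3*a := by
        have h5 : (4*e) * (s0^2 + 3*t0^2) = (4*e) * (3*a/(4*e)) := by rw [hst]
        rw [mul_div_cancel₀ _ (mul_ne_zero h4 he)] at h5
        linear_combination h5
      have hA : a - e*(s0 + t0)^2 ≠ 0 := by
        intro h
        exact hsq ⟨s0 + t0, by linear_combination -h⟩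
      obtain ⟨s, t, s', t', h1, hh2, hh3⟩ := aux_case3 he h2 hA hg
      exact ⟨s, t, s0 + t0, s', t', 2*t0, h1, hh2, hh3⟩

lemma exists_isotropic {F V : Type*} [Field F] [Fintype F] [AddCommGroup V] [Module F V]
    [FiniteDimensional F V] (q : QuadraticForm F V) (hdim : 3 ≤ Module.finrank F V) :
    ∃ v : V, v ≠ 0 ∧ q v = 0 := by
  classical
  set n := Module.finrank F V with hn
  let b : Basis (Fin n) F V := Module.finBasis F V
  open MvPolynomial in
  let f : MvPolynomial (Fin n) F :=
    (∑ i : Fin n, C (q (b i)) * X i ^ 2) +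
    ∑ ij ∈ Finset.univ.sym2 with ¬ ij.IsDiag,
      Sym2.lift ⟨fun i j => C (polar q (b i) (b j)) * (X i * X j),
        fun i j => by dsimp only; rw [polar_comm]; ring⟩ ij
  have heval : ∀ x : Fin n → F, MvPolynomial.eval x f = q (∑ i, x i • b i) := by
    intro x
    rw [QuadraticMap.map_sum]
    simp only [f, map_add, map_sum, MvPolynomial.eval_mul, MvPolynomial.eval_pow,
      MvPolynomial.eval_C, MvPolynomial.eval_X]
    congr 1
    · refine Finset.sum_congr rfl fun i _ => ?_
      rw [QuadraticMap.map_smul, smul_eq_mul]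
      ring
    · refine Finset.sum_congr rfl fun ij _ => ?_
      induction ij using Sym2.inductionOn with
      | hf i j =>
        simp only [Sym2.lift_mk, map_mul, MvPolynomial.eval_C, MvPolynomial.eval_X,
          Sym2.map_mk, polarSym2_sym2Mk, polar_smul_left, polar_smul_right, smul_eq_mul]
        ring
  have hdeg : f.totalDegree < Fintype.card (Fin n) := by
    rw [Fintype.card_fin]
    refine lt_of_le_of_lt ?_ (lt_of_lt_of_le (by norm_num : (2:ℕ) < 3) hdim)
    refine le_trans (MvPolynomial.totalDegree_add _ _) ?_
    rw [max_le_iff]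
    constructor
    · refine le_trans (MvPolynomial.totalDegree_finset_sum _ _) ?_
      refine Finset.sup_le fun i _ => ?_
      refine le_trans (MvPolynomial.totalDegree_mul _ _) ?_
      simp [MvPolynomial.totalDegree_C]
    · refine le_trans (MvPolynomial.totalDegree_finset_sum _ _) ?_
      refine Finset.sup_le fun ij _ => ?_
      induction ij using Sym2.inductionOn with
      | hf i j =>
        simp only [Sym2.lift_mk]
        refine le_trans (MvPolynomial.totalDegree_mul _ _) ?_
        rw [MvPolynomial.totalDegree_C, zero_add]
        refine le_trans (MvPolynomial.totalDegree_mul _ _) ?_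
        simp [MvPolynomial.totalDegree_X]
  have hCW : ringChar F ∣ Fintype.card {x : Fin n → F // MvPolynomial.eval x f = 0} :=
    char_dvd_card_solutions (ringChar F) hdeg
  have hp : (ringChar F).Prime := CharP.char_is_prime F (ringChar F)
  have hzero : MvPolynomial.eval (0 : Fin n → F) f = 0 := by
    rw [heval]
    simp
  have hcard : 1 < Fintype.card {x : Fin n → F // MvPolynomial.eval x f = 0} := by
    have hpos : 0 < Fintype.card {x : Fin n → F // MvPolynomial.eval x f = 0} :=
      Fintype.card_pos_iff.mpr ⟨⟨0, hzero⟩⟩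
    have h2 := hp.two_le
    have hle := Nat.le_of_dvd hpos hCW
    omega
  obtain ⟨y, hy⟩ := Fintype.exists_ne_of_one_lt_card hcard ⟨0, hzero⟩
  refine ⟨∑ i, y.1 i • b i, ?_, by rw [← heval]; exact y.2⟩
  intro hv
  apply hy
  ext i
  exact Fintype.linearIndependent_iff.mp b.linearIndependent y.1 hv i

lemma pair_fix {F V : Type*} [Field F] [AddCommGroup V] [Module F V]
    (q : QuadraticForm F V) {v w1 : V} (hqv : q v = 0)
    (hvw1 : polar (⇑q) v w1 = 1) :
    ∃ w : V, q w = 0 ∧ polar (⇑q) v w = 1 := by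
  refine ⟨w1 - q w1 • v, ?_, ?_⟩
  · rw [sub_eq_add_neg, QuadraticMap.map_add (⇑q),
      show -(q w1 • v) = (-(q w1)) • v by simp, QuadraticMap.map_smul,
      polar_smul_right, polar_comm, hvw1, hqv]
    simp
  · rw [polar_sub_right, polar_smul_right, polar_self, hvw1, hqv]
    simp

lemma exists_hyperbolic_pair {F V : Type*} [Field F] [AddCommGroup V] [Module F V]
    (q : QuadraticForm F V)
    (hnd : ∀ x : V, (∀ y : V, polar (⇑q) x y = 0) → x = 0)
    {v : V} (hv0 : v ≠ 0) (hqv : q v = 0) :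
    ∃ w : V, q w = 0 ∧ polar (⇑q) v w = 1 := by
  have hpol : ¬ ∀ y, polar (⇑q) v y = 0 := fun h => hv0 (hnd v h)
  push_neg at hpol
  obtain ⟨w0, hw0⟩ := hpol
  refine pair_fix q hqv (w1 := (polar (⇑q) v w0)⁻¹ • w0) ?_
  rw [polar_smul_right, smul_eq_mul, inv_mul_cancel₀ hw0]

lemma exists_orth {F V : Type*} [Field F] [AddCommGroup V] [Module F V]
    [FiniteDimensional F V] (q : QuadraticForm F V) (hdim : 3 ≤ Module.finrank F V)
    (hnd : ∀ x : V, (∀ y : V, polar (⇑q) x y = 0) → x = 0)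
    {v w : V} (hqv : q v = 0) (hqw : q w = 0) (hvw : polar (⇑q) v w = 1) :
    ∃ u : V, polar (⇑q) v u = 0 ∧ polar (⇑q) w u = 0 ∧ q u ≠ 0 := by
  classical
  set P : V → V := fun x => x - polar (⇑q) w x • v - polar (⇑q) v x • w with hP
  have hwv : polar (⇑q) w v = 1 := by rw [polar_comm]; exact hvw
  have hPv : ∀ x, polar (⇑q) v (P x) = 0 := by
    intro x
    simp only [hP, polar_sub_right, polar_smul_right, polar_self, hqv, hvw, smul_eq_mul,
      smul_zero, mul_zero, mul_one]
    ring
  have hPw : ∀ x, polar (⇑q) w (P x) = 0 := by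
    intro x
    simp only [hP, polar_sub_right, polar_smul_right, polar_self, hqw, hwv, smul_eq_mul,
      smul_zero, mul_zero, mul_one]
    ring
  by_contra hcon
  push_neg at hcon
  have hall : ∀ x, q (P x) = 0 := fun x => hcon (P x) (hPv x) (hPw x)
  have hlin : ∀ x y, P (x + y) = P x + P y := by
    intro x y
    simp only [hP, polar_add_right, add_smul]
    abel
  have hppolar : ∀ x y, polar (⇑q) (P x) (P y) = 0 := by
    intro x y
    rw [polar, ← hlin, hall, hall, hall]
    ring
  have hx0 : ∃ x, P x ≠ 0 := by
    by_contra hPz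
    push_neg at hPz
    have hmem : ∀ x : V, x ∈ Submodule.span F ({v, w} : Set V) := by
      intro x
      have hx := hPz x
      rw [hP] at hx
      simp only [sub_sub, sub_eq_zero] at hx
      rw [hx]
      exact Submodule.add_mem _
        (Submodule.smul_mem _ _ (Submodule.subset_span (by simp)))
        (Submodule.smul_mem _ _ (Submodule.subset_span (by simp)))
    have hspan : Submodule.span F ({v, w} : Set V) = ⊤ := by
      rw [eq_top_iff]; exact fun x _ => hmem x
    have h2 : Module.finrank F V ≤ 2 := by
      have h := finrank_span_le_card (R := F) ({v, w} : Set V)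
      rw [hspan, finrank_top] at h
      refine le_trans h ?_
      have hsub : ({v, w} : Set V).toFinset ⊆ ({v, w} : Finset V) := by
        intro x hx
        simpa using Set.mem_toFinset.mp hx
      exact le_trans (Finset.card_le_card hsub)
        (le_trans (Finset.card_insert_le _ _) (by simp))
    omega
  obtain ⟨x0, hx0⟩ := hx0
  apply hx0
  apply hnd
  intro y
  have hy : y = P y + (polar (⇑q) w y • v + polar (⇑q) v y • w) := by
    rw [hP]; dsimp only; module
  calc polar (⇑q) (P x0) y
      = polar (⇑q) (P x0) (P y + (polar (⇑q) w y • v + polar (⇑q) v y • w)) := by rw [← hy]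
    _ = 0 := by
        rw [polar_add_right, polar_add_right, polar_smul_right, polar_smul_right,
          hppolar, polar_comm _ _ v, polar_comm _ _ w, hPv, hPw]
        simp

lemma egirth_eq_three_of_triangle {α : Type*} (G : SimpleGraph α) {x y z : α}
    (hxy : G.Adj x y) (hyz : G.Adj y z) (hzx : G.Adj z x) : G.egirth = 3 := by
  refine le_antisymm ?_ G.three_le_egirth
  let w : G.Walk x x := .cons hxy (.cons hyz (.cons hzx .nil))
  have hc : w.IsCycle := by
    simp [w, SimpleGraph.Walk.isCycle_def, SimpleGraph.Walk.isTrail_def,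
      hxy.ne, hyz.ne, hzx.ne, hxy.ne', hyz.ne', hzx.ne']
  have : G.egirth ≤ (w.length : ℕ∞) := by
    rw [SimpleGraph.egirth]
    exact iInf_le_of_le x (iInf_le_of_le w (iInf_le_of_le hc le_rfl))
  simpa [w] using this

end Aux

/-- Over a finite field, a non-degenerate quadratic form of dimension at least `3` and
`a ≠ 0` yield girth `3` for the representation graph `G_{q,a}`. -/
theorem stmt_17 {F V : Type*} [Field F] [Fintype F]
    [AddCommGroup V] [Module F V] [FiniteDimensional F V]
    (q : QuadraticForm F V) (hdim : 3 ≤ Module.finrank F V)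
    (hnd : ∀ x : V, (∀ y : V, polar (⇑q) x y = 0) → x = 0)
    (a : F) (ha : a ≠ 0) :
    (repGraph q a).egirth = 3 := by
  obtain ⟨v, hv0, hqv⟩ := exists_isotropic q hdim
  obtain ⟨w, hqw, hvw⟩ := exists_hyperbolic_pair q hnd hv0 hqv
  obtain ⟨u, hvu, hwu, hqu⟩ := exists_orth q hdim hnd hqv hqw hvw
  obtain ⟨s, t, r, s', t', r', h1, h2, h3⟩ := aux_triangle (e := q u) ha hqu
  have key : ∀ st tt rt : F, q (st•v + tt•w + rt•u) = st*tt + (q u)*rt^2 := by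
    intro st tt rt
    have hplane : q (st•v + tt•w) = st*tt := by
      rw [QuadraticMap.map_add (⇑q), QuadraticMap.map_smul, QuadraticMap.map_smul,
        polar_smul_left, polar_smul_right, hqv, hqw, hvw]
      simp [smul_eq_mul]
    have hortho : polar (⇑q) (st•v + tt•w) (rt•u) = 0 := by
      rw [polar_add_left, polar_smul_left, polar_smul_right, polar_smul_left,
        polar_smul_right, hvu, hwu]
      simp
    rw [QuadraticMap.map_add (⇑q), hplane, hortho, QuadraticMap.map_smul, smul_eq_mul]
    ring
  have hqX : q (s•v + t•w + r•u) = a := by rw [key]; exact h1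
  have hqY : q (s'•v + t'•w + r'•u) = a := by rw [key]; exact h2
  have hXYd : (s•v + t•w + r•u) - (s'•v + t'•w + r'•u)
      = (s-s')•v + (t-t')•w + (r-r')•u := by module
  have hqD : q ((s•v + t•w + r•u) - (s'•v + t'•w + r'•u)) = a := by
    rw [hXYd, key]
    linear_combination h1 + h2 - h3
  have hX0 : (s•v + t•w + r•u) ≠ 0 := by
    intro h
    rw [h, map_zero] at hqX
    exact ha hqX.symm
  have hY0 : (s'•v + t'•w + r'•u) ≠ 0 := by
    intro h
    rw [h, map_zero] at hqY
    exact ha hqY.symm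
  have hXneY : (s•v + t•w + r•u) ≠ (s'•v + t'•w + r'•u) := by
    intro h
    rw [h, sub_self, map_zero] at hqD
    exact ha hqD.symm
  have a1 : (repGraph q a).Adj 0 (s•v + t•w + r•u) := by
    refine ⟨(Ne.symm hX0), ?_⟩
    rw [zero_sub, QuadraticMap.map_neg]
    exact hqX
  have a2 : (repGraph q a).Adj (s•v + t•w + r•u) (s'•v + t'•w + r'•u) := ⟨hXneY, hqD⟩
  have a3 : (repGraph q a).Adj (s'•v + t'•w + r'•u) 0 := by
    refine ⟨hY0, ?_⟩
    rw [sub_zero]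
    exact hqY
  exact egirth_eq_three_of_triangle _ a1 a2 a3
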